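/- Let I be a square-free monomial ideal of R = k[x_1,...,x_d]. Then I^n = I^{(n)} for all positive integers n if and only if x_1⋯x_d · I^{2n+1} ⊆ (I^{n+1})^{[2]} for every n with n < μ(I)/2, where (I^{n+1})^{[2]} is the ideal generated by the squares of the monomial generators of I^{n+1}. -/

import Mathlib

open MvPolynomial

/-- For a monomial ideal `J`, the bracket power `J^{[2]}` (generated by the squares of
the monomial generators of `J`) is the extension of `J` along the `k`-algebra map
`x_i ↦ x_i^2`. -/
noncomputable def bracketTwo (k : Type*) [Field k] (d : ℕ)
    (J : Ideal (MvPolynomial (Fin d) k)) : Ideal (MvPolynomial (Fin d) k) :=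
  Ideal.map (MvPolynomial.aeval (R := k) fun i : Fin d => X i ^ 2).toRingHom J



namespace FedderAux

variable {d : ℕ}

/-- `sums A n` : sums of `n` elements of `A`. -/
def sums (A : Set (Fin d →₀ ℕ)) : ℕ → Set (Fin d →₀ ℕ)
  | 0 => {0}
  | n + 1 => {c | ∃ a ∈ A, ∃ b ∈ sums A n, c = a + b}

lemma mem_sums_zero {A : Set (Fin d →₀ ℕ)} {c : Fin d →₀ ℕ} :
    c ∈ sums A 0 ↔ c = 0 := Iff.rfl

lemma mem_sums_succ {A : Set (Fin d →₀ ℕ)} {n : ℕ} {c : Fin d →₀ ℕ} :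
    c ∈ sums A (n + 1) ↔ ∃ a ∈ A, ∃ b ∈ sums A n, c = a + b := Iff.rfl

lemma zero_mem_sums {A : Set (Fin d →₀ ℕ)} (h0 : 0 ∈ A) : ∀ n, (0 : Fin d →₀ ℕ) ∈ sums A n
  | 0 => rfl
  | n + 1 => mem_sums_succ.mpr ⟨0, h0, 0, zero_mem_sums h0 n, (zero_add 0).symm⟩

lemma sums_mono_le {A : Set (Fin d →₀ ℕ)} :
    ∀ {m m' : ℕ} {b : Fin d →₀ ℕ}, b ∈ sums A m → m' ≤ m → ∃ b' ∈ sums A m', b' ≤ b := by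
  intro m
  induction m with
  | zero => intro m' b hb hm'; interval_cases m'; exact ⟨b, hb, le_rfl⟩
  | succ m ih =>
    intro m' b hb hm'
    obtain ⟨a, ha, c, hc, rfl⟩ := mem_sums_succ.mp hb
    rcases Nat.eq_or_lt_of_le hm' with h | h
    · subst h; exact ⟨a + c, mem_sums_succ.mpr ⟨a, ha, c, hc, rfl⟩, le_rfl⟩
    · obtain ⟨b', hb', hle⟩ := ih hc (Nat.lt_succ_iff.mp h)
      exact ⟨b', hb', hle.trans le_add_self⟩

lemma add_mem_sums {A : Set (Fin d →₀ ℕ)} :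
    ∀ {m m' : ℕ} {b c : Fin d →₀ ℕ}, b ∈ sums A m → c ∈ sums A m' → b + c ∈ sums A (m + m') := by
  intro m
  induction m with
  | zero =>
    intro m' b c hb hc
    have hb0 : b = 0 := hb
    simpa [hb0] using hc
  | succ m ih =>
    intro m' b c hb hc
    obtain ⟨a, ha, b', hb', rfl⟩ := mem_sums_succ.mp hb
    have h1 : a + b' + c = a + (b' + c) := add_assoc _ _ _
    have h2 : m + 1 + m' = (m + m') + 1 := by omega
    rw [h1, h2]
    exact mem_sums_succ.mpr ⟨a, ha, b' + c, ih hb' hc, rfl⟩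

lemma nsmul_mem_sums {A : Set (Fin d →₀ ℕ)} {m : ℕ} {b : Fin d →₀ ℕ} (hb : b ∈ sums A m) :
    ∀ q : ℕ, q • b ∈ sums A (q * m)
  | 0 => by simpa using mem_sums_zero.mpr rfl
  | q + 1 => by
    have := add_mem_sums hb (nsmul_mem_sums hb q)
    have h1 : (q + 1) • b = b + q • b := by rw [add_smul, one_smul, add_comm]
    have h2 : (q + 1) * m = m + q * m := by ring
    rw [h1, h2]; exact this

lemma finsetSum_mem_sums {A : Set (Fin d →₀ ℕ)} {n : ℕ} (σ : Finset (Fin d))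
    (b : Fin d → (Fin d →₀ ℕ)) (hb : ∀ i ∈ σ, b i ∈ sums A n) :
    ∑ i ∈ σ, b i ∈ sums A (σ.card * n) := by
  classical
  induction σ using Finset.induction_on with
  | empty => simpa using mem_sums_zero.mpr rfl
  | @insert i σ' hni ih =>
    rw [Finset.sum_insert hni, Finset.card_insert_of_notMem hni]
    have h2 : (σ'.card + 1) * n = n + σ'.card * n := by ring
    rw [h2]
    exact add_mem_sums (hb i (Finset.mem_insert_self _ _))
      (ih fun j hj => hb j (Finset.mem_insert_of_mem hj))


lemma mem_sums_iff_multiset {A : Set (Fin d →₀ ℕ)} :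
    ∀ {n : ℕ} {b : Fin d →₀ ℕ}, b ∈ sums A n ↔
      ∃ L : Multiset (Fin d →₀ ℕ), L.card = n ∧ (∀ x ∈ L, x ∈ A) ∧ L.sum = b := by
  intro n
  induction n with
  | zero =>
    intro b
    constructor
    · intro hb; exact ⟨0, by simp, by simp, by simpa using (mem_sums_zero.mp hb).symm⟩
    · rintro ⟨L, hL, -, hs⟩
      rw [Multiset.card_eq_zero] at hL
      subst hL
      simpa [mem_sums_zero] using hs.symm
  | succ n ih =>
    intro b
    constructor
    · intro hb
      obtain ⟨a, ha, c, hc, rfl⟩ := mem_sums_succ.mp hb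
      obtain ⟨L, hL, hmem, hsum⟩ := ih.mp hc
      exact ⟨a ::ₘ L, by simp [hL], by
        intro x hx
        rcases Multiset.mem_cons.mp hx with h | h
        · subst h; exact ha
        · exact hmem x h, by simp [hsum]⟩
    · rintro ⟨L, hL, hmem, rfl⟩
      have hne : L ≠ 0 := by
        intro h; rw [h] at hL; simp at hL
      obtain ⟨a, ha⟩ := Multiset.exists_mem_of_ne_zero hne
      have hLe : L = a ::ₘ L.erase a := (Multiset.cons_erase ha).symm
      have hcard : (L.erase a).card = n := by
        have := Multiset.card_erase_of_mem ha
        rw [this, hL]; rfl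
      refine mem_sums_succ.mpr ⟨a, hmem a ha, (L.erase a).sum, ih.mpr
        ⟨L.erase a, hcard, fun x hx => hmem x (Multiset.mem_of_mem_erase hx), rfl⟩, ?_⟩
      rw [hLe]; simp

/-- Pigeonhole: a sum of more than `G.card` elements of `G` repeats a summand twice. -/
lemma sums_repeat {G : Finset (Fin d →₀ ℕ)} {m : ℕ} {b : Fin d →₀ ℕ}
    (hb : b ∈ sums (G : Set (Fin d →₀ ℕ)) m) (hm : G.card < m) :
    ∃ g ∈ G, ∃ b'' ∈ sums (G : Set (Fin d →₀ ℕ)) (m - 2), b = g + g + b'' := by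
  classical
  obtain ⟨L, hL, hmem, rfl⟩ := mem_sums_iff_multiset.mp hb
  have hcount : ∃ g ∈ L, 2 ≤ L.count g := by
    by_contra hc
    push_neg at hc
    have h1 : L.card = ∑ x ∈ L.toFinset, L.count x := (Multiset.toFinset_sum_count_eq L).symm
    have h2 : ∑ x ∈ L.toFinset, L.count x ≤ ∑ _x ∈ L.toFinset, 1 := by
      refine Finset.sum_le_sum fun x hx => ?_
      have := hc x (Multiset.mem_toFinset.mp hx)
      omega
    have h3 : L.toFinset ⊆ G := fun x hx => hmem x (Multiset.mem_toFinset.mp hx)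
    have h4 : L.toFinset.card ≤ G.card := Finset.card_le_card h3
    simp only [Finset.sum_const, smul_eq_mul, mul_one] at h2
    omega
  obtain ⟨g, hgL, hg2⟩ := hcount
  set L'' := (L.erase g).erase g with hL''
  have hL2 : L = g ::ₘ g ::ₘ L'' := by
    have hgL' : g ∈ L.erase g := by
      rw [← Multiset.count_pos, Multiset.count_erase_self]; omega
    rw [hL'', Multiset.cons_erase hgL', Multiset.cons_erase hgL]
  have hcard'' : L''.card = m - 2 := by
    have := congrArg Multiset.card hL2
    simp at this; omega
  have hmem'' : ∀ x ∈ L'', x ∈ (G : Set (Fin d →₀ ℕ)) := by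
    intro x hx
    exact hmem x (by rw [hL2]; exact Multiset.mem_cons_of_mem (Multiset.mem_cons_of_mem hx))
  refine ⟨g, hmem g hgL, L''.sum, mem_sums_iff_multiset.mpr ⟨L'', hcard'', hmem'', rfl⟩, ?_⟩
  rw [hL2]; simp [add_assoc]


lemma sum_mem_sums_bound {A : Set (Fin d →₀ ℕ)} {F : Finset (Fin d)}
    (h : ∀ g ∈ A, 1 ≤ ∑ i ∈ F, g i) :
    ∀ {m : ℕ} {b : Fin d →₀ ℕ}, b ∈ sums A m → m ≤ ∑ i ∈ F, b i := by
  intro m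
  induction m with
  | zero => intro b _; exact Nat.zero_le _
  | succ m ih =>
    intro b hb
    obtain ⟨a, ha, c, hc, rfl⟩ := mem_sums_succ.mp hb
    have : ∑ i ∈ F, (a + c) i = (∑ i ∈ F, a i) + ∑ i ∈ F, c i := by
      simp [Finsupp.add_apply, Finset.sum_add_distrib]
    rw [this]
    have h1 := h a ha
    have h2 := ih hc
    omega

lemma single_sum_eq {F : Finset (Fin d)} {i : Fin d} (hi : i ∈ F) :
    ∑ j ∈ F, (Finsupp.single i (1 : ℕ)) j = 1 := by
  classical
  have : ∀ j, (Finsupp.single i (1 : ℕ)) j = if i = j then 1 else 0 := by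
    intro j; rw [Finsupp.single_apply]
  simp only [this]
  rw [Finset.sum_ite_eq F i (fun _ => (1 : ℕ))]
  simp [hi]

lemma mem_sums_singles_bound {F : Finset (Fin d)} {n : ℕ} {b : Fin d →₀ ℕ}
    (hb : b ∈ sums ((fun i => Finsupp.single i (1 : ℕ)) '' (F : Set (Fin d))) n) :
    n ≤ ∑ i ∈ F, b i := by
  refine sum_mem_sums_bound ?_ hb
  rintro g ⟨j, hj, rfl⟩
  rw [single_sum_eq hj]

lemma exists_mem_sums_singles {F : Finset (Fin d)} :
    ∀ {n : ℕ} {c : Fin d →₀ ℕ}, n ≤ ∑ i ∈ F, c i →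
      ∃ b ∈ sums ((fun i => Finsupp.single i (1 : ℕ)) '' (F : Set (Fin d))) n, b ≤ c := by
  intro n
  induction n with
  | zero => intro c _; exact ⟨0, mem_sums_zero.mpr rfl, zero_le⟩
  | succ n ih =>
    intro c hc
    have hex : ∃ i ∈ F, c i ≠ 0 := by
      by_contra hcon
      push_neg at hcon
      have : ∑ i ∈ F, c i = 0 := Finset.sum_eq_zero hcon
      omega
    obtain ⟨i, hiF, hci⟩ := hex
    have hsle : Finsupp.single i (1 : ℕ) ≤ c := Finsupp.single_le_iff.mpr (by omega)
    set c' := c - Finsupp.single i (1 : ℕ) with hc'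
    have hco : Finsupp.single i (1 : ℕ) + c' = c := add_tsub_cancel_of_le hsle
    have hsum : (1 : ℕ) + ∑ j ∈ F, c' j = ∑ j ∈ F, c j := by
      rw [← hco]
      simp only [Finsupp.add_apply, Finset.sum_add_distrib]
      rw [single_sum_eq hiF]
    have hn : n ≤ ∑ j ∈ F, c' j := by omega
    obtain ⟨b', hb', hble⟩ := ih hn
    refine ⟨Finsupp.single i 1 + b',
      mem_sums_succ.mpr ⟨Finsupp.single i 1, ⟨i, hiF, rfl⟩, b', hb', rfl⟩, ?_⟩
    rw [← hco]
    exact add_le_add_right hble _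

lemma ceil_sum_bound {F : Finset (Fin d)} {c : Fin d →₀ ℕ} {n : ℕ}
    (h : 2 * n + 1 ≤ ∑ i ∈ F, c i) : n + 1 ≤ ∑ i ∈ F, (c i + 1) / 2 := by
  have h1 : ∑ i ∈ F, c i ≤ ∑ i ∈ F, 2 * ((c i + 1) / 2) :=
    Finset.sum_le_sum fun i _ => by omega
  rw [← Finset.mul_sum] at h1
  omega


lemma single_sum_le {F : Finset (Fin d)} {i : Fin d} :
    ∑ j ∈ F, (Finsupp.single i (1 : ℕ)) j ≤ 1 := by
  classical
  have : ∀ j, (Finsupp.single i (1 : ℕ)) j = if i = j then 1 else 0 := by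
    intro j; rw [Finsupp.single_apply]
  simp only [this]
  rw [Finset.sum_ite_eq F i (fun _ => (1 : ℕ))]
  split <;> omega

lemma chi_apply (σ : Finset (Fin d)) (l : Fin d) :
    (∑ i ∈ σ, Finsupp.single i (1 : ℕ)) l = if l ∈ σ then 1 else 0 := by
  classical
  rw [Finset.sum_apply']
  have : ∀ j, (Finsupp.single j (1 : ℕ)) l = if j = l then 1 else 0 := by
    intro j; rw [Finsupp.single_apply]
  simp only [this]
  rw [Finset.sum_ite_eq' σ l (fun _ => (1 : ℕ))]

end FedderAux



namespace FedderAux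

variable {k : Type*} [Field k] {d : ℕ}

/-- The monomial ideal with generator exponents `A`. -/
noncomputable def mI (k : Type*) [Field k] {d : ℕ} (A : Set (Fin d →₀ ℕ)) :
    Ideal (MvPolynomial (Fin d) k) :=
  Ideal.span ((fun a => monomial a (1 : k)) '' A)

lemma mem_mI {A : Set (Fin d →₀ ℕ)} {f : MvPolynomial (Fin d) k} :
    f ∈ mI k A ↔ ∀ c ∈ f.support, ∃ a ∈ A, a ≤ c :=
  mem_ideal_span_monomial_image

lemma monomial_mem_mI {A : Set (Fin d →₀ ℕ)} {c : Fin d →₀ ℕ} :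
    monomial c (1 : k) ∈ mI k A ↔ ∃ a ∈ A, a ≤ c := by
  classical
  rw [mem_mI, support_monomial, if_neg (one_ne_zero : (1 : k) ≠ 0)]
  simp

lemma mI_mul {A B : Set (Fin d →₀ ℕ)} :
    mI k A * mI k B = mI k {c | ∃ a ∈ A, ∃ b ∈ B, c = a + b} := by
  classical
  apply le_antisymm
  · rw [Ideal.mul_le]
    intro r hr s hs
    rw [mem_mI] at hr hs ⊢
    intro c hc
    have := MvPolynomial.support_mul r s hc
    rw [Finset.mem_add] at this
    obtain ⟨c1, hc1, c2, hc2, rfl⟩ := this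
    obtain ⟨a, ha, hale⟩ := hr c1 hc1
    obtain ⟨b, hb, hble⟩ := hs c2 hc2
    exact ⟨a + b, ⟨a, ha, b, hb, rfl⟩, add_le_add hale hble⟩
  · rw [mI, Ideal.span_le]
    rintro x ⟨c, ⟨a, ha, b, hb, rfl⟩, rfl⟩
    show (monomial (a + b) (1 : k)) ∈ mI k A * mI k B
    have : (monomial (a + b) (1 : k)) = monomial a 1 * monomial b 1 := by
      rw [monomial_mul, one_mul]
    rw [this]
    exact Ideal.mul_mem_mul (Ideal.subset_span ⟨a, ha, rfl⟩) (Ideal.subset_span ⟨b, hb, rfl⟩)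

lemma mI_pow {A : Set (Fin d →₀ ℕ)} : ∀ n : ℕ, (mI k A) ^ n = mI k (sums A n)
  | 0 => by
    rw [pow_zero]
    symm
    rw [Ideal.one_eq_top, Ideal.eq_top_iff_one]
    have h1 : (1 : MvPolynomial (Fin d) k) = monomial 0 1 := by simp
    rw [h1]
    exact monomial_mem_mI.mpr ⟨0, mem_sums_zero.mpr rfl, le_rfl⟩
  | n + 1 => by
    rw [pow_succ, mI_pow n, mul_comm, mI_mul]
    rfl


lemma span_X_eq_mI {F : Finset (Fin d)} :
    Ideal.span (X '' (F : Set (Fin d)) : Set (MvPolynomial (Fin d) k)) =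
      mI k ((fun i => Finsupp.single i (1 : ℕ)) '' (F : Set (Fin d))) := by
  rw [mI, Set.image_image]
  rfl

lemma aeval_sq_monomial (a : Fin d →₀ ℕ) :
    (MvPolynomial.aeval (R := k) fun i : Fin d => X i ^ 2) (monomial a (1 : k)) =
      monomial (a + a) (1 : k) := by
  rw [aeval_monomial, map_one, one_mul]
  rw [monomial_eq, map_one, one_mul]
  rw [Finsupp.prod_add_index (by intro i _; rw [pow_zero]) (by intro i _ e1 e2; rw [pow_add])]
  unfold Finsupp.prod
  rw [← Finset.prod_mul_distrib]
  refine Finset.prod_congr rfl fun i _ => ?_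
  show ((X i : MvPolynomial (Fin d) k) ^ 2) ^ (a i) = X i ^ (a i) * X i ^ (a i)
  rw [← pow_add, ← pow_mul, two_mul]

lemma bracketTwo_mI {A : Set (Fin d →₀ ℕ)} :
    bracketTwo k d (mI k A) = mI k ((fun a => a + a) '' A) := by
  rw [bracketTwo, mI, Ideal.map_span, mI, ← Set.image_comp, ← Set.image_comp]
  congr 1
  ext f
  constructor
  · rintro ⟨a, ha, rfl⟩
    exact ⟨a, ha, (aeval_sq_monomial a).symm⟩
  · rintro ⟨a, ha, rfl⟩
    exact ⟨a, ha, aeval_sq_monomial a⟩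

/-- the all-ones exponent vector -/
noncomputable def ones (d : ℕ) : Fin d →₀ ℕ := ∑ i : Fin d, Finsupp.single i 1

lemma ones_apply (i : Fin d) : ones d i = 1 := by
  classical
  rw [ones, Finset.sum_apply']
  have : ∀ j, (Finsupp.single j (1 : ℕ)) i = if j = i then 1 else 0 := by
    intro j; rw [Finsupp.single_apply]
  simp only [this]
  rw [Finset.sum_ite_eq' Finset.univ i (fun _ => (1 : ℕ))]
  simp

lemma prod_X_eq : (∏ i : Fin d, X i : MvPolynomial (Fin d) k) = monomial (ones d) 1 := by
  classical
  rw [ones]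
  induction (Finset.univ : Finset (Fin d)) using Finset.induction_on with
  | empty => simp
  | @insert i σ' hni ih =>
    rw [Finset.prod_insert hni, Finset.sum_insert hni, ih]
    show monomial (Finsupp.single i 1) (1 : k) * _ = _
    rw [monomial_mul, one_mul]

end FedderAux



namespace FedderAux

variable {k : Type*} [Field k] {d : ℕ}

/-- membership predicate for powers of the monomial ideal (exponent level) -/
def Pex (G : Finset (Fin d →₀ ℕ)) (n : ℕ) (c : Fin d →₀ ℕ) : Prop :=
  ∃ b ∈ sums (G : Set (Fin d →₀ ℕ)) n, b ≤ c

lemma Qpow_mem {Fj : Finset (Fin d)} {n : ℕ} {f : MvPolynomial (Fin d) k} :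
    f ∈ (Ideal.span (X '' (Fj : Set (Fin d))) : Ideal (MvPolynomial (Fin d) k)) ^ n ↔
      ∀ c ∈ f.support, n ≤ ∑ i ∈ Fj, c i := by
  rw [span_X_eq_mI, mI_pow, mem_mI]
  constructor
  · intro h c hc
    obtain ⟨b, hb, hle⟩ := h c hc
    exact le_trans (mem_sums_singles_bound hb)
      (Finset.sum_le_sum fun i _ => Finsupp.le_def.mp hle i)
  · intro h c hc
    exact exists_mem_sums_singles (h c hc)

lemma Ipow_mem {G : Finset (Fin d →₀ ℕ)} {I : Ideal (MvPolynomial (Fin d) k)}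
    (hG : I = Ideal.span ((fun a => monomial a (1 : k)) '' (G : Set (Fin d →₀ ℕ))))
    {n : ℕ} {f : MvPolynomial (Fin d) k} :
    f ∈ I ^ n ↔ ∀ c ∈ f.support, Pex G n c := by
  have hG' : I = mI k (G : Set (Fin d →₀ ℕ)) := hG
  rw [hG', mI_pow, mem_mI]
  rfl

lemma monomial_mem_Ipow {G : Finset (Fin d →₀ ℕ)} {I : Ideal (MvPolynomial (Fin d) k)}
    (hG : I = Ideal.span ((fun a => monomial a (1 : k)) '' (G : Set (Fin d →₀ ℕ))))
    {n : ℕ} {c : Fin d →₀ ℕ} :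
    monomial c (1 : k) ∈ I ^ n ↔ Pex G n c := by
  classical
  rw [Ipow_mem hG, support_monomial, if_neg (one_ne_zero : (1 : k) ≠ 0)]
  simp [Pex]


section Main

variable {s : ℕ} {F : Fin s → Finset (Fin d)} {Q : Fin s → Ideal (MvPolynomial (Fin d) k)}
  {I : Ideal (MvPolynomial (Fin d) k)} {G : Finset (Fin d →₀ ℕ)}

/-- membership predicate for powers of the `Q j` (exponent level) -/
def Sex (F : Fin s → Finset (Fin d)) (n : ℕ) (c : Fin d →₀ ℕ) : Prop :=
  ∀ j, n ≤ ∑ i ∈ F j, c i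

lemma symb_mem (hQ : ∀ j, Q j = Ideal.span (X '' (F j : Set (Fin d))))
    {n : ℕ} {f : MvPolynomial (Fin d) k} :
    f ∈ ⨅ j, Q j ^ n ↔ ∀ c ∈ f.support, Sex F n c := by
  rw [Submodule.mem_iInf]
  constructor
  · intro h c hc j
    exact (Qpow_mem.mp ((hQ j) ▸ h j)) c hc
  · intro h j
    rw [hQ j, Qpow_mem]
    intro c hc
    exact h c hc j

lemma hg_one (hQ : ∀ j, Q j = Ideal.span (X '' (F j : Set (Fin d))))
    (hI : I = ⨅ j, Q j)
    (hG : I = Ideal.span ((fun a => monomial a (1 : k)) '' (G : Set (Fin d →₀ ℕ))))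
    {g : Fin d →₀ ℕ} (hg : g ∈ G) : ∀ j, 1 ≤ ∑ i ∈ F j, g i := by
  intro j
  have h1 : monomial g (1 : k) ∈ I := by
    rw [hG]
    exact Ideal.subset_span ⟨g, hg, rfl⟩
  rw [hI] at h1
  have h2 : monomial g (1 : k) ∈ Q j := Submodule.mem_iInf _ |>.mp h1 j
  rw [hQ j, ← pow_one (Ideal.span _)] at h2
  classical
  have := Qpow_mem.mp h2 g (by
    rw [support_monomial, if_neg (one_ne_zero : (1 : k) ≠ 0)]; simp)
  exact this

lemma Pex_to_Sex (hQ : ∀ j, Q j = Ideal.span (X '' (F j : Set (Fin d))))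
    (hI : I = ⨅ j, Q j)
    (hG : I = Ideal.span ((fun a => monomial a (1 : k)) '' (G : Set (Fin d →₀ ℕ))))
    {n : ℕ} {c : Fin d →₀ ℕ} (h : Pex G n c) : Sex F n c := by
  obtain ⟨b, hb, hle⟩ := h
  intro j
  refine le_trans (sum_mem_sums_bound ?_ hb) (Finset.sum_le_sum fun i _ => Finsupp.le_def.mp hle i)
  intro g hg
  exact hg_one hQ hI hG hg j

lemma Sex_one (hQ : ∀ j, Q j = Ideal.span (X '' (F j : Set (Fin d))))
    (hI : I = ⨅ j, Q j)
    (hG : I = Ideal.span ((fun a => monomial a (1 : k)) '' (G : Set (Fin d →₀ ℕ))))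
    {c : Fin d →₀ ℕ} (h : Sex F 1 c) : ∃ g ∈ G, g ≤ c := by
  classical
  have h1 : monomial c (1 : k) ∈ ⨅ j, Q j ^ 1 := by
    rw [symb_mem hQ]
    intro c' hc'
    rw [support_monomial, if_neg (one_ne_zero : (1 : k) ≠ 0)] at hc'
    simp at hc'
    subst hc'
    exact h
  simp only [pow_one] at h1
  rw [← hI, hG] at h1
  have h2 := mem_ideal_span_monomial_image.mp h1 c (by
    rw [support_monomial, if_neg (one_ne_zero : (1 : k) ≠ 0)]; simp)
  obtain ⟨g, hg, hle⟩ := h2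
  exact ⟨g, hg, hle⟩


/-- the combinatorial Fedder condition at level `t` -/
def Fed (G : Finset (Fin d →₀ ℕ)) (t : ℕ) : Prop :=
  ∀ b ∈ sums (G : Set (Fin d →₀ ℕ)) (2 * t + 1),
    ∃ m ∈ sums (G : Set (Fin d →₀ ℕ)) (t + 1), ∀ i, 2 * m i ≤ 1 + b i

lemma fed_all (hFed : ∀ t, 2 * t < G.card → Fed G t) : ∀ t, Fed G t := by
  intro t
  induction t using Nat.strong_induction_on with
  | _ t ih =>
    by_cases ht : 2 * t < G.card
    · exact hFed t ht
    · push_neg at ht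
      intro b hb
      have hcard : G.card < 2 * t + 1 := by omega
      have ht1 : 1 ≤ t := by
        rcases Nat.eq_zero_or_pos G.card with h0 | h1
        · exfalso
          rw [Finset.card_eq_zero] at h0
          subst h0
          obtain ⟨a, ha, -⟩ := mem_sums_succ.mp hb
          simp at ha
        · omega
      obtain ⟨g, hg, b'', hb'', rfl⟩ := sums_repeat hb hcard
      have hidx : 2 * t + 1 - 2 = 2 * (t - 1) + 1 := by omega
      rw [hidx] at hb''
      obtain ⟨m', hm', hm'le⟩ := ih (t - 1) (by omega) b'' hb''
      have hidx2 : t - 1 + 1 = t := by omega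
      rw [hidx2] at hm'
      refine ⟨g + m', mem_sums_succ.mpr ⟨g, hg, m', hm', rfl⟩, ?_⟩
      intro i
      have h1 := hm'le i
      simp only [Finsupp.add_apply]
      omega

lemma descent (hFed : ∀ t, Fed G t) (n' : ℕ) :
    ∀ (kk : ℕ) (c : Fin d →₀ ℕ),
      (∃ b ∈ sums (G : Set (Fin d →₀ ℕ)) (2 ^ kk * n' + 1), b ≤ (2 ^ kk) • c) →
        Pex G (n' + 1) c := by
  intro kk
  induction kk with
  | zero =>
    intro c ⟨b, hb, hle⟩
    rw [pow_zero, one_mul] at hb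
    rw [pow_zero, one_smul] at hle
    exact ⟨b, hb, hle⟩
  | succ kk ih =>
    intro c ⟨b, hb, hle⟩
    have hidx : 2 ^ (kk + 1) * n' + 1 = 2 * (2 ^ kk * n') + 1 := by ring
    rw [hidx] at hb
    obtain ⟨m, hm, hmle⟩ := hFed (2 ^ kk * n') b hb
    refine ih c ⟨m, hm, ?_⟩
    rw [Finsupp.le_def]
    intro i
    have h1 := hmle i
    have h2 : b i ≤ (2 ^ (kk + 1) • c) i := Finsupp.le_def.mp hle i
    rw [Finsupp.smul_apply, smul_eq_mul] at h2 ⊢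
    have h3 : 2 ^ (kk + 1) * c i = 2 * (2 ^ kk * c i) := by ring
    omega


lemma comb_main (hQ : ∀ j, Q j = Ideal.span (X '' (F j : Set (Fin d))))
    (hI : I = ⨅ j, Q j)
    (hG : I = Ideal.span ((fun a => monomial a (1 : k)) '' (G : Set (Fin d →₀ ℕ))))
    (hsf : ∀ a ∈ G, ∀ i, a i ≤ 1)
    (hFed : ∀ t, Fed G t) :
    ∀ n, 1 ≤ n → ∀ c, Sex F n c → Pex G n c := by
  intro n
  induction n using Nat.strong_induction_on with
  | _ n ih =>
    intro hn c hS
    rcases Nat.lt_or_ge n 2 with h2 | h2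
    · have hn1 : n = 1 := by omega
      subst hn1
      obtain ⟨g, hg, hle⟩ := Sex_one hQ hI hG hS
      exact ⟨g, mem_sums_succ.mpr ⟨g, hg, 0, mem_sums_zero.mpr rfl, (add_zero g).symm⟩, hle⟩
    · obtain ⟨n', rfl⟩ : ∃ n', n = n' + 1 := ⟨n - 1, by omega⟩
      have hn' : 1 ≤ n' := by omega
      by_cases hc0 : c = 0
      · subst hc0
        have hS1 : Sex F 1 (0 : Fin d →₀ ℕ) := by
          intro j
          have h1 := hS j
          simp only [Finsupp.coe_zero, Pi.zero_apply, Finset.sum_const_zero] at h1 ⊢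
          omega
        obtain ⟨g, hg, hle⟩ := Sex_one hQ hI hG hS1
        have hg0 : g = 0 := by
          ext i
          have h := Finsupp.le_def.mp hle i
          simpa using h
        exact ⟨0, zero_mem_sums (by rw [← hg0]; exact hg) _, le_rfl⟩
      · set σ := c.support with hσ
        have hσne : σ.Nonempty := Finsupp.support_nonempty_iff.mpr hc0
        set s0 := σ.card with hs0
        have hs0pos : 1 ≤ s0 := Finset.card_pos.mpr hσne
        have hsingle_le : ∀ i ∈ σ, ∀ l, (Finsupp.single i (1 : ℕ)) l ≤ c l := by
          intro i hi l
          rw [Finsupp.single_apply]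
          split
          · next h =>
              subst h
              have : c i ≠ 0 := Finsupp.mem_support_iff.mp hi
              omega
          · omega
        have step1 : ∀ i : Fin d, ∃ b, i ∈ σ →
            (b ∈ sums (G : Set (Fin d →₀ ℕ)) n' ∧
              ∀ l, b l + (Finsupp.single i (1 : ℕ)) l ≤ c l) := by
          intro i
          by_cases hi : i ∈ σ
          · set cmi : Fin d →₀ ℕ := c - Finsupp.single i (1 : ℕ) with hcmi
            have hSi : Sex F n' cmi := by
              intro j
              have h1 : ∑ l ∈ F j, c l ≤ (∑ l ∈ F j, cmi l) + 1 := by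
                have hpt : ∀ l ∈ F j,
                    c l ≤ cmi l + (Finsupp.single i (1 : ℕ)) l := by
                  intro l _
                  rw [hcmi, Finsupp.tsub_apply]
                  have := hsingle_le i hi l
                  omega
                calc ∑ l ∈ F j, c l
                    ≤ ∑ l ∈ F j, (cmi l + (Finsupp.single i (1 : ℕ)) l) :=
                      Finset.sum_le_sum hpt
                  _ = (∑ l ∈ F j, cmi l)
                        + ∑ l ∈ F j, (Finsupp.single i (1 : ℕ)) l := Finset.sum_add_distrib
                  _ ≤ (∑ l ∈ F j, cmi l) + 1 := by
                      have := single_sum_le (F := F j) (i := i)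
                      omega
              have h2 := hS j
              omega
            obtain ⟨b, hb, hble⟩ := ih n' (by omega) hn' _ hSi
            refine ⟨b, fun _ => ⟨hb, fun l => ?_⟩⟩
            have h3 := Finsupp.le_def.mp hble l
            rw [hcmi, Finsupp.tsub_apply] at h3
            have h4 := hsingle_le i hi l
            omega
          · exact ⟨0, fun h => absurd h hi⟩
        choose bf hbf using step1
        have hBsum : (∑ i ∈ σ, bf i) ∈ sums (G : Set (Fin d →₀ ℕ)) (s0 * n') :=
          finsetSum_mem_sums σ bf (fun i hi => (hbf i hi).1)
        have hBle : ∀ l, (∑ i ∈ σ, bf i) l + (∑ i ∈ σ, Finsupp.single i (1 : ℕ)) l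
            ≤ s0 * c l := by
          intro l
          have h1 : ∑ i ∈ σ, (bf i l + (Finsupp.single i (1 : ℕ)) l) ≤ ∑ _i ∈ σ, c l :=
            Finset.sum_le_sum (fun i hi => (hbf i hi).2 l)
          rw [Finset.sum_const, smul_eq_mul] at h1
          rw [Finset.sum_apply', Finset.sum_apply', ← Finset.sum_add_distrib]
          exact h1
        have hSc1 : Sex F 1 c := fun j => le_trans (by omega) (hS j)
        obtain ⟨g0, hg0G, hg0le⟩ := Sex_one hQ hI hG hSc1
        have hg0chi : ∀ l, g0 l ≤ (∑ i ∈ σ, Finsupp.single i (1 : ℕ)) l := by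
          intro l
          rw [chi_apply]
          have h1 := hsf g0 hg0G l
          by_cases hl : l ∈ σ
          · simp only [hl, if_true]; omega
          · simp only [hl, if_false]
            have h2 := Finsupp.le_def.mp hg0le l
            have h3 : c l = 0 := by
              rw [hσ] at hl
              exact Finsupp.notMem_support_iff.mp hl
            omega
        have hW : (g0 + ∑ i ∈ σ, bf i) ∈ sums (G : Set (Fin d →₀ ℕ)) (s0 * n' + 1) :=
          mem_sums_succ.mpr ⟨g0, hg0G, _, hBsum, rfl⟩
        have hWle : ∀ l, (g0 + ∑ i ∈ σ, bf i) l ≤ s0 * c l := by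
          intro l
          rw [Finsupp.add_apply]
          have h1 := hBle l
          have h2 := hg0chi l
          omega
        have hSn' : Sex F n' c := fun j => le_trans (by omega) (hS j)
        obtain ⟨b0, hb0, hb0le⟩ := ih n' (by omega) hn' c hSn'
        have hse : s0 ≤ 2 ^ s0 := le_of_lt (Nat.lt_two_pow_self (n := s0))
        set e := 2 ^ s0 with he
        set q := e / s0 with hq
        set r := e % s0 with hr
        have hq1 : 1 ≤ q := (Nat.one_le_div_iff (by omega)).mpr hse
        have hqr : s0 * q + r = e := by rw [hq, hr]; exact Nat.div_add_mod e s0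
        have hbig : (q • (g0 + ∑ i ∈ σ, bf i) + r • b0)
            ∈ sums (G : Set (Fin d →₀ ℕ)) (q * (s0 * n' + 1) + r * n') :=
          add_mem_sums (nsmul_mem_sums hW q) (nsmul_mem_sums hb0 r)
        have hbigle : (q • (g0 + ∑ i ∈ σ, bf i) + r • b0) ≤ e • c := by
          rw [Finsupp.le_def]
          intro l
          rw [Finsupp.add_apply, Finsupp.smul_apply, Finsupp.smul_apply, Finsupp.smul_apply,
            smul_eq_mul, smul_eq_mul, smul_eq_mul]
          have h1 := hWle l
          have h2 := Finsupp.le_def.mp hb0le l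
          have h3 : q * ((g0 + ∑ i ∈ σ, bf i) l) ≤ q * (s0 * c l) := Nat.mul_le_mul_left _ h1
          have h4 : r * (b0 l) ≤ r * c l := Nat.mul_le_mul_left _ h2
          have h5 : e * c l = q * (s0 * c l) + r * c l := by rw [← hqr]; ring
          omega
        have hlevel : e * n' + 1 ≤ q * (s0 * n' + 1) + r * n' := by
          have h6 : q * (s0 * n' + 1) + r * n' = (s0 * q + r) * n' + q := by ring
          rw [h6, hqr]
          omega
        obtain ⟨W', hW', hW'le⟩ := sums_mono_le hbig hlevel
        exact descent hFed n' s0 c ⟨W', hW', le_trans hW'le hbigle⟩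


lemma fedder_of_comb (hQ : ∀ j, Q j = Ideal.span (X '' (F j : Set (Fin d))))
    (hI : I = ⨅ j, Q j)
    (hG : I = Ideal.span ((fun a => monomial a (1 : k)) '' (G : Set (Fin d →₀ ℕ))))
    (hCOMB : ∀ m, 1 ≤ m → ∀ c, Sex F m c → Pex G m c) (n : ℕ) :
    ∀ f ∈ I ^ (2 * n + 1),
      (∏ i : Fin d, X i) * f ∈ bracketTwo k d (I ^ (n + 1)) := by
  classical
  have hG' : I = mI k (G : Set (Fin d →₀ ℕ)) := hG
  have hBT : bracketTwo k d (I ^ (n + 1)) =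
      mI k ((fun a => a + a) '' sums (G : Set (Fin d →₀ ℕ)) (n + 1)) := by
    rw [hG', mI_pow, bracketTwo_mI]
  intro f hf
  rw [hG', mI_pow] at hf
  rw [hBT]
  unfold mI at hf
  refine Submodule.span_induction
    (p := fun x _ => (∏ i : Fin d, X i) * x ∈
      mI k ((fun a => a + a) '' sums (G : Set (Fin d →₀ ℕ)) (n + 1)))
    ?_ ?_ ?_ ?_ hf
  · rintro x ⟨b, hb, rfl⟩
    show (∏ i : Fin d, X i) * monomial b (1 : k) ∈ _
    rw [prod_X_eq, monomial_mul, one_mul]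
    apply monomial_mem_mI.mpr
    set mc : Fin d →₀ ℕ := Finsupp.mapRange (fun e => (e + 1) / 2) (by norm_num) b with hmcdef
    have hmc : ∀ i, mc i = (b i + 1) / 2 := fun i => Finsupp.mapRange_apply
    have hSb : Sex F (2 * n + 1) b := Pex_to_Sex hQ hI hG ⟨b, hb, le_rfl⟩
    have hSmc : Sex F (n + 1) mc := by
      intro j
      have h1 := hSb j
      have h2 := ceil_sum_bound (F := F j) (c := b) (n := n) h1
      calc n + 1 ≤ ∑ i ∈ F j, (b i + 1) / 2 := h2
        _ = ∑ i ∈ F j, mc i := Finset.sum_congr rfl fun i _ => (hmc i).symm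
    obtain ⟨m', hm', hm'le⟩ := hCOMB (n + 1) (by omega) mc hSmc
    refine ⟨m' + m', ⟨m', hm', rfl⟩, ?_⟩
    rw [Finsupp.le_def]
    intro i
    have h3 := Finsupp.le_def.mp hm'le i
    rw [hmc i] at h3
    simp only [Finsupp.add_apply, ones_apply]
    omega
  · show (∏ i : Fin d, X i) * 0 ∈ _
    rw [mul_zero]
    exact Submodule.zero_mem _
  · intro x y _ _ px py
    show (∏ i : Fin d, X i) * (x + y) ∈ _
    rw [mul_add]
    exact Ideal.add_mem _ px py
  · intro a x _ px
    show (∏ i : Fin d, X i) * (a • x) ∈ _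
    rw [smul_eq_mul, ← mul_assoc, mul_comm _ a, mul_assoc]
    exact Ideal.mul_mem_left _ _ px

end Main

end FedderAux


open FedderAux

/-- let `I` be a square-free monomial ideal of `R = k[x_1,…,x_d]` with
minimal primes `Q_1,…,Q_s`, symbolic powers `I^{(n)} = ⋂_j Q_j^n`, and minimal monomial
generating set `{x^a : a ∈ G}` (so `μ(I) = |G|`). Then `I^n = I^{(n)}` for all `n ≥ 1`
if and only if `x_1 ⋯ x_d · I^{2n+1} ⊆ (I^{n+1})^{[2]}` for every `n < μ(I)/2`. -/
theorem ordinary_eq_symbolic_iff_fedder (k : Type*) [Field k] (d s : ℕ)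
    (F : Fin s → Finset (Fin d))
    (Q : Fin s → Ideal (MvPolynomial (Fin d) k))
    (hQ : ∀ j, Q j = Ideal.span (X '' (F j : Set (Fin d))))
    (I : Ideal (MvPolynomial (Fin d) k)) (hI : I = ⨅ j, Q j)
    (hmin : I.minimalPrimes = Set.range Q)
    (G : Finset (Fin d →₀ ℕ))
    (hG : I = Ideal.span ((fun a => monomial a (1 : k)) '' (G : Set (Fin d →₀ ℕ))))
    (hsf : ∀ a ∈ G, ∀ i, a i ≤ 1)
    (hGmin : ∀ a ∈ G, ∀ b ∈ G, a ≤ b → a = b) :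
    (∀ n : ℕ, 1 ≤ n → I ^ n = ⨅ j, Q j ^ n) ↔
      (∀ n : ℕ, 2 * n < G.card →
        ∀ f ∈ I ^ (2 * n + 1),
          (∏ i : Fin d, X i) * f ∈ bracketTwo k d (I ^ (n + 1))) := by
  classical
  constructor
  · intro hEq n _ f hf
    have hCOMB : ∀ m, 1 ≤ m → ∀ c, Sex F m c → Pex G m c := by
      intro m hm c hS
      have h1 : monomial c (1 : k) ∈ ⨅ j, Q j ^ m := by
        rw [symb_mem hQ]
        intro c' hc'
        rw [support_monomial, if_neg (one_ne_zero : (1 : k) ≠ 0)] at hc'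
        simp only [Finset.mem_singleton] at hc'
        subst hc'
        exact hS
      rw [← hEq m hm] at h1
      exact (monomial_mem_Ipow hG).mp h1
    exact fedder_of_comb hQ hI hG hCOMB n f hf
  · intro hF n hn
    have hFed0 : ∀ t, 2 * t < G.card → Fed G t := by
      intro t ht b hb
      have hfm : monomial b (1 : k) ∈ I ^ (2 * t + 1) :=
        (monomial_mem_Ipow hG).mpr ⟨b, hb, le_rfl⟩
      have h2 := hF t ht _ hfm
      have hBT : bracketTwo k d (I ^ (t + 1)) =
          mI k ((fun a => a + a) '' sums (G : Set (Fin d →₀ ℕ)) (t + 1)) := by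
        rw [show I = mI k (G : Set (Fin d →₀ ℕ)) from hG, mI_pow, bracketTwo_mI]
      rw [hBT, prod_X_eq, monomial_mul, one_mul] at h2
      obtain ⟨a, ⟨m, hm, rfl⟩, hle⟩ := monomial_mem_mI.mp h2
      refine ⟨m, hm, fun i => ?_⟩
      have h3 := Finsupp.le_def.mp hle i
      simp only [Finsupp.add_apply, ones_apply] at h3
      omega
    have hFed := fed_all hFed0
    have hCOMB := comb_main hQ hI hG hsf hFed
    apply le_antisymm
    · refine le_iInf fun j => Ideal.pow_right_mono ?_ n
      rw [hI]
      exact iInf_le _ j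
    · intro f hf
      rw [Ipow_mem hG]
      intro c hc
      exact hCOMB n hn c ((symb_mem hQ).mp hf c hc)
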